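/- arXiv:2101.09561 — 2 statements merged into one kernel-verified Lean document; each statement's English description precedes it below -/
import Mathlib

section
/- Let R > 1 and let D = {z ∈ ℂ : 1 < |z| < R} be the round annulus. Define Δ1 = {r·exp(iθ) : 1 < r < R, 0 < θ < 4π/3}, Δ2 = {exp(2πi/3)·z : z ∈ Δ1} and Δ3 = {exp(4πi/3)·z : z ∈ Δ1}. Then each Δj (j = 1, 2, 3) is an open subset of D, and for every pair of points z1, z2 ∈ D there exists j ∈ {1, 2, 3} such that both z1 and z2 belong to the closure of Δj. -/
open Real Set Complex

private lemma polar_eq (r θ : ℝ) (hr : 0 < r) :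
    (r : ℂ) * Complex.exp (θ * Complex.I) = Complex.exp (Real.log r + θ * Complex.I) := by
  rw [Complex.exp_add, ← Complex.ofReal_exp, Real.exp_log hr]

private lemma sector_eq (R : ℝ) (hR : 1 < R) :
    {w : ℂ | ∃ r θ : ℝ, 1 < r ∧ r < R ∧ 0 < θ ∧ θ < 4 * π / 3 ∧
      w = (r : ℂ) * Complex.exp (θ * Complex.I)}
    = Complex.exp '' ((Complex.re ⁻¹' Ioo 0 (Real.log R)) ∩
        (Complex.im ⁻¹' Ioo 0 (4 * π / 3))) := by
  ext w
  simp only [mem_setOf_eq, mem_image, mem_inter_iff, mem_preimage, mem_Ioo]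
  constructor
  · rintro ⟨r, θ, hr, hrR, hθ, hθ', rfl⟩
    refine ⟨(Real.log r : ℂ) + (θ : ℂ) * Complex.I, ⟨⟨?_, ?_⟩, ?_, ?_⟩,
      (polar_eq r θ (by linarith)).symm⟩
    · simpa using Real.log_pos hr
    · simpa using Real.log_lt_log (by linarith) hrR
    · simpa using hθ
    · simpa using hθ'
  · rintro ⟨z, ⟨⟨h1, h2⟩, h3, h4⟩, rfl⟩
    refine ⟨Real.exp z.re, z.im, ?_, ?_, h3, h4, ?_⟩
    · simpa using Real.exp_lt_exp.mpr h1
    · exact (Real.exp_lt_exp.mpr h2).trans_eq (Real.exp_log (by linarith))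
    · rw [polar_eq _ _ (Real.exp_pos _), Real.log_exp, Complex.re_add_im]

private lemma mem_closure_sector (R r θ : ℝ) (hr : 1 < r) (hrR : r < R)
    (h1 : 0 ≤ θ) (h2 : θ ≤ 4 * π / 3) :
    (r : ℂ) * Complex.exp (θ * Complex.I) ∈
      closure {w : ℂ | ∃ r' θ' : ℝ, 1 < r' ∧ r' < R ∧ 0 < θ' ∧ θ' < 4 * π / 3 ∧
        w = (r' : ℂ) * Complex.exp (θ' * Complex.I)} := by
  have hc : Continuous fun t : ℝ => (r : ℂ) * Complex.exp ((t : ℂ) * Complex.I) := by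
    continuity
  have hθ : θ ∈ closure (Ioo 0 (4 * π / 3)) := by
    rw [closure_Ioo (by positivity : (0:ℝ) ≠ 4 * π / 3)]
    exact ⟨h1, h2⟩
  have hmem := image_closure_subset_closure_image hc (mem_image_of_mem _ hθ)
  refine closure_mono ?_ hmem
  rintro _ ⟨t, ⟨ht1, ht2⟩, rfl⟩
  exact ⟨r, t, hr, hrR, ht1, ht2, rfl⟩

private lemma rot_polar (c r θ : ℝ) :
    Complex.exp ((c : ℂ) * Complex.I) * ((r : ℂ) * Complex.exp ((θ : ℂ) * Complex.I))
      = (r : ℂ) * Complex.exp (((c + θ : ℝ) : ℂ) * Complex.I) := by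
  rw [mul_left_comm, ← Complex.exp_add]
  congr 2
  push_cast
  ring

private lemma exp_add_two_pi (t : ℝ) :
    Complex.exp (((t + 2 * π : ℝ) : ℂ) * Complex.I) = Complex.exp ((t : ℂ) * Complex.I) := by
  push_cast
  rw [add_mul, Complex.exp_add, Complex.exp_two_pi_mul_I, mul_one]

private lemma mem_closure_rot (R c r ψ : ℝ) (hr : 1 < r) (hrR : r < R)
    (h1 : c ≤ ψ) (h2 : ψ ≤ c + 4 * π / 3) :
    (r : ℂ) * Complex.exp ((ψ : ℂ) * Complex.I) ∈
      closure ((fun z : ℂ => Complex.exp ((c : ℂ) * Complex.I) * z) ''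
        {w : ℂ | ∃ r' θ' : ℝ, 1 < r' ∧ r' < R ∧ 0 < θ' ∧ θ' < 4 * π / 3 ∧
          w = (r' : ℂ) * Complex.exp ((θ' : ℂ) * Complex.I)}) := by
  set S := {w : ℂ | ∃ r' θ' : ℝ, 1 < r' ∧ r' < R ∧ 0 < θ' ∧ θ' < 4 * π / 3 ∧
      w = (r' : ℂ) * Complex.exp ((θ' : ℂ) * Complex.I)} with hS
  have hc0 : Complex.exp ((c : ℂ) * Complex.I) ≠ 0 := Complex.exp_ne_zero _
  have him : (fun z : ℂ => Complex.exp ((c : ℂ) * Complex.I) * z) '' closure S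
      = closure ((fun z : ℂ => Complex.exp ((c : ℂ) * Complex.I) * z) '' S) :=
    (Homeomorph.mulLeft₀ _ hc0).image_closure S
  rw [← him]
  refine ⟨(r : ℂ) * Complex.exp (((ψ - c : ℝ) : ℂ) * Complex.I), ?_, ?_⟩
  · exact mem_closure_sector R r (ψ - c) hr hrR (by linarith) (by linarith)
  · show Complex.exp ((c : ℂ) * Complex.I) *
        ((r : ℂ) * Complex.exp (((ψ - c : ℝ) : ℂ) * Complex.I)) = _
    rw [rot_polar c r (ψ - c), show c + (ψ - c) = ψ by ring]

private lemma angle_cases (θ1 θ2 : ℝ) (h1 : 0 < θ1) (h1' : θ1 ≤ 2 * π)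
    (h2 : 0 < θ2) (h2' : θ2 ≤ 2 * π) :
    ((θ1 ≤ 4 * π / 3 ∨ θ1 = 2 * π) ∧ (θ2 ≤ 4 * π / 3 ∨ θ2 = 2 * π)) ∨
    (2 * π / 3 ≤ θ1 ∧ 2 * π / 3 ≤ θ2) ∨
    ((θ1 ≤ 2 * π / 3 ∨ 4 * π / 3 ≤ θ1) ∧ (θ2 ≤ 2 * π / 3 ∨ 4 * π / 3 ≤ θ2)) := by
  have hπ := Real.pi_pos
  have hfail : ∀ θ : ℝ, θ ≤ 2 * π → ¬(θ ≤ 4 * π / 3 ∨ θ = 2 * π) →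
      2 * π / 3 ≤ θ ∧ (θ ≤ 2 * π / 3 ∨ 4 * π / 3 ≤ θ) := by
    intro θ hle hn
    push_neg at hn
    exact ⟨by linarith [hn.1], Or.inr (by linarith [hn.1])⟩
  by_cases a1 : θ1 ≤ 4 * π / 3 ∨ θ1 = 2 * π
  · by_cases a2 : θ2 ≤ 4 * π / 3 ∨ θ2 = 2 * π
    · exact Or.inl ⟨a1, a2⟩
    · obtain ⟨hb2, hc2⟩ := hfail θ2 h2' a2
      by_cases b1 : 2 * π / 3 ≤ θ1
      · exact Or.inr (Or.inl ⟨b1, hb2⟩)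
      · exact Or.inr (Or.inr ⟨Or.inl (le_of_not_ge b1), hc2⟩)
  · obtain ⟨hb1, hc1⟩ := hfail θ1 h1' a1
    by_cases b2 : 2 * π / 3 ≤ θ2
    · exact Or.inr (Or.inl ⟨hb1, b2⟩)
    · exact Or.inr (Or.inr ⟨hc1, Or.inl (le_of_not_ge b2)⟩)

/-- Osgood's quasiconformal decomposition of the round annulus `1 < |z| < R`:
the three sectors of angular width `4π/3` obtained from one another by rotation
through `2π/3` are open subsets of the annulus, and any two points of the annulus
lie together in the closure of one of them. -/
theorem annulus_decomposition (R : ℝ) (hR : 1 < R)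
    (D : Set ℂ) (hD : D = {z : ℂ | 1 < ‖z‖ ∧ ‖z‖ < R})
    (Δ1 Δ2 Δ3 : Set ℂ)
    (hΔ1 : Δ1 = {w : ℂ | ∃ r θ : ℝ, 1 < r ∧ r < R ∧ 0 < θ ∧ θ < 4 * π / 3 ∧
      w = (r : ℂ) * Complex.exp (θ * Complex.I)})
    (hΔ2 : Δ2 = (fun z : ℂ => Complex.exp (2 * π * Complex.I / 3) * z) '' Δ1)
    (hΔ3 : Δ3 = (fun z : ℂ => Complex.exp (4 * π * Complex.I / 3) * z) '' Δ1) :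
    (IsOpen Δ1 ∧ Δ1 ⊆ D) ∧ (IsOpen Δ2 ∧ Δ2 ⊆ D) ∧ (IsOpen Δ3 ∧ Δ3 ⊆ D) ∧
      ∀ z1 ∈ D, ∀ z2 ∈ D, ∃ Δ ∈ ({Δ1, Δ2, Δ3} : Set (Set ℂ)),
        z1 ∈ closure Δ ∧ z2 ∈ closure Δ := by
  have hπ := Real.pi_pos
  have hc2 : (2 * (π : ℂ) * Complex.I / 3) = ((2 * π / 3 : ℝ) : ℂ) * Complex.I := by
    push_cast; ring
  have hc3 : (4 * (π : ℂ) * Complex.I / 3) = ((4 * π / 3 : ℝ) : ℂ) * Complex.I := by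
    push_cast; ring
  rw [hc2] at hΔ2
  rw [hc3] at hΔ3
  -- openness of Δ1
  have hopen1 : IsOpen Δ1 := by
    rw [hΔ1, sector_eq R hR]
    exact Complex.isOpenMap_exp _
      ((isOpen_Ioo.preimage Complex.continuous_re).inter
        (isOpen_Ioo.preimage Complex.continuous_im))
  -- Δ1 ⊆ D
  have hsub1 : Δ1 ⊆ D := by
    rw [hΔ1, hD]
    rintro w ⟨r, θ, hr, hrR, _, _, rfl⟩
    have : ‖(r : ℂ) * Complex.exp ((θ : ℂ) * Complex.I)‖ = r := by
      rw [norm_mul, Complex.norm_exp]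
      simp [abs_of_pos (show (0:ℝ) < r by linarith)]
    exact ⟨by rw [this]; exact hr, by rw [this]; exact hrR⟩
  have habs : ∀ c : ℝ, ∀ z : ℂ,
      ‖Complex.exp ((c : ℂ) * Complex.I) * z‖ = ‖z‖ := by
    intro c z
    rw [norm_mul, Complex.norm_exp]
    simp
  have hsub2 : Δ2 ⊆ D := by
    rw [hΔ2]
    rintro w ⟨z, hz, rfl⟩
    have := hsub1 hz
    rw [hD] at this ⊢
    simpa [norm_mul, Complex.norm_exp] using this
  have hsub3 : Δ3 ⊆ D := by
    rw [hΔ3]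
    rintro w ⟨z, hz, rfl⟩
    have := hsub1 hz
    rw [hD] at this ⊢
    simpa [norm_mul, Complex.norm_exp] using this
  have hopen2 : IsOpen Δ2 := by
    rw [hΔ2]
    exact ((Homeomorph.mulLeft₀ _ (Complex.exp_ne_zero _)).isOpenMap) _ hopen1
  have hopen3 : IsOpen Δ3 := by
    rw [hΔ3]
    exact ((Homeomorph.mulLeft₀ _ (Complex.exp_ne_zero _)).isOpenMap) _ hopen1
  refine ⟨⟨hopen1, hsub1⟩, ⟨hopen2, hsub2⟩, ⟨hopen3, hsub3⟩, ?_⟩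
  -- covering property
  -- representation of points of D
  have hrep : ∀ z ∈ D, ∃ r θ : ℝ, 1 < r ∧ r < R ∧ 0 < θ ∧ θ ≤ 2 * π ∧
      z = (r : ℂ) * Complex.exp ((θ : ℂ) * Complex.I) := by
    intro z hz
    rw [hD] at hz
    obtain ⟨h1, h2⟩ := hz
    have hzz := Complex.norm_mul_exp_arg_mul_I z
    by_cases ha : 0 < Complex.arg z
    · exact ⟨‖z‖, Complex.arg z, h1, h2, ha,
        by linarith [Complex.arg_le_pi z], hzz.symm⟩
    · refine ⟨‖z‖, Complex.arg z + 2 * π, h1, h2,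
        by linarith [Complex.neg_pi_lt_arg z], by linarith [le_of_not_gt ha], ?_⟩
      rw [exp_add_two_pi, hzz]
  -- closure membership lemmas specialized
  have hcl1 : ∀ r θ : ℝ, 1 < r → r < R → 0 ≤ θ → θ ≤ 4 * π / 3 →
      (r : ℂ) * Complex.exp ((θ : ℂ) * Complex.I) ∈ closure Δ1 := by
    intro r θ hr hrR h1 h2
    rw [hΔ1]
    exact mem_closure_sector R r θ hr hrR h1 h2
  have hcl2 : ∀ r ψ : ℝ, 1 < r → r < R → 2 * π / 3 ≤ ψ → ψ ≤ 2 * π →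
      (r : ℂ) * Complex.exp ((ψ : ℂ) * Complex.I) ∈ closure Δ2 := by
    intro r ψ hr hrR h1 h2
    rw [hΔ2, hΔ1]
    exact mem_closure_rot R (2 * π / 3) r ψ hr hrR h1 (by linarith)
  have hcl3 : ∀ r ψ : ℝ, 1 < r → r < R → 4 * π / 3 ≤ ψ → ψ ≤ 8 * π / 3 →
      (r : ℂ) * Complex.exp ((ψ : ℂ) * Complex.I) ∈ closure Δ3 := by
    intro r ψ hr hrR h1 h2
    rw [hΔ3, hΔ1]
    exact mem_closure_rot R (4 * π / 3) r ψ hr hrR h1 (by linarith)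
  -- membership from angle conditions
  have hm1 : ∀ r θ : ℝ, 1 < r → r < R → 0 < θ → θ ≤ 2 * π →
      (θ ≤ 4 * π / 3 ∨ θ = 2 * π) →
      (r : ℂ) * Complex.exp ((θ : ℂ) * Complex.I) ∈ closure Δ1 := by
    intro r θ hr hrR h0 h2π hA
    rcases hA with h | h
    · exact hcl1 r θ hr hrR (le_of_lt h0) h
    · have : ((θ : ℝ) : ℂ) * Complex.I = (((0 : ℝ) + 2 * π : ℝ) : ℂ) * Complex.I := by
        rw [h]; norm_num
      rw [this, exp_add_two_pi]
      exact hcl1 r 0 hr hrR le_rfl (by linarith)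
  have hm3 : ∀ r θ : ℝ, 1 < r → r < R → 0 < θ → θ ≤ 2 * π →
      (θ ≤ 2 * π / 3 ∨ 4 * π / 3 ≤ θ) →
      (r : ℂ) * Complex.exp ((θ : ℂ) * Complex.I) ∈ closure Δ3 := by
    intro r θ hr hrR h0 h2π hC
    rcases hC with h | h
    · rw [← exp_add_two_pi θ]
      exact hcl3 r (θ + 2 * π) hr hrR (by linarith) (by linarith)
    · exact hcl3 r θ hr hrR h (by linarith)
  intro z1 hz1 z2 hz2
  obtain ⟨r1, θ1, hr1, hr1R, hθ1, hθ1', hz1eq⟩ := hrep z1 hz1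
  obtain ⟨r2, θ2, hr2, hr2R, hθ2, hθ2', hz2eq⟩ := hrep z2 hz2
  rcases angle_cases θ1 θ2 hθ1 hθ1' hθ2 hθ2' with ⟨hA1, hA2⟩ | ⟨hB1, hB2⟩ | ⟨hC1, hC2⟩
  · exact ⟨Δ1, by simp, by rw [hz1eq]; exact hm1 r1 θ1 hr1 hr1R hθ1 hθ1' hA1,
      by rw [hz2eq]; exact hm1 r2 θ2 hr2 hr2R hθ2 hθ2' hA2⟩
  · exact ⟨Δ2, by simp, by rw [hz1eq]; exact hcl2 r1 θ1 hr1 hr1R hB1 hθ1',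
      by rw [hz2eq]; exact hcl2 r2 θ2 hr2 hr2R hB2 hθ2'⟩
  · exact ⟨Δ3, by simp, by rw [hz1eq]; exact hm3 r1 θ1 hr1 hr1R hθ1 hθ1' hC1,
      by rw [hz2eq]; exact hm3 r2 θ2 hr2 hr2R hθ2 hθ2' hC2⟩
end

section
/- Let U ⊆ ℂ be open and let f : ℂ → ℂ be holomorphic on U with f'(z) ≠ 0 for all z ∈ U. Define ρ : U → ℝ by ρ(z) = log(|f'(z)|²). Then for every z ∈ U, applying the Wirtinger derivative twice gives ∂(∂ρ)(z) − (1/2)·(∂ρ(z))² = f'''(z)/f'(z) − (3/2)·(f''(z)/f'(z))²; that is, the Hernández–Martín Schwarzian derivative of f reduces to the classical Schwarzian derivative of the holomorphic function f. -/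
open Complex

/-- The Wirtinger derivative `∂g(z) = (1/2)·(Dg(z)(1) − i·Dg(z)(i))`, where `Dg(z)` is the
real Fréchet derivative of `g` at `z`. -/
noncomputable def wirtinger (g : ℂ → ℂ) (z : ℂ) : ℂ :=
  (1 / 2) * (fderiv ℝ g z 1 - Complex.I * fderiv ℝ g z Complex.I)

lemma wirtinger_of_differentiableAt {g : ℂ → ℂ} {z : ℂ} (hg : DifferentiableAt ℂ g z) :
    wirtinger g z = deriv g z := by
  have h1 : fderiv ℝ g z = (fderiv ℂ g z).restrictScalars ℝ :=
    (hg.hasFDerivAt.restrictScalars ℝ).fderiv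
  have h2 : ∀ v : ℂ, fderiv ℂ g z v = deriv g z * v := by
    intro v
    have := hg.hasDerivAt.hasFDerivAt.fderiv
    rw [this]
    simp [mul_comm]
  unfold wirtinger
  rw [h1]
  simp only [ContinuousLinearMap.coe_restrictScalars', h2]
  have : Complex.I * (deriv g z * Complex.I) = -deriv g z := by
    rw [mul_comm (deriv g z), ← mul_assoc, Complex.I_mul_I]; ring
  rw [this]; ring

lemma wirtinger_conj {g : ℂ → ℂ} {z : ℂ} (hg : DifferentiableAt ℂ g z) :
    wirtinger (fun w => (starRingEnd ℂ) (g w)) z = 0 := by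
  have h1 : fderiv ℝ (fun w => (starRingEnd ℂ) (g w)) z =
      (Complex.conjCLE : ℂ ≃L[ℝ] ℂ).toContinuousLinearMap.comp (fderiv ℝ g z) := by
    have := (Complex.conjCLE : ℂ ≃L[ℝ] ℂ).comp_fderiv (f := g) (x := z)
    exact this
  have h2 : ∀ v : ℂ, fderiv ℂ g z v = deriv g z * v := by
    intro v
    rw [hg.hasDerivAt.hasFDerivAt.fderiv]
    simp [mul_comm]
  have h3 : fderiv ℝ g z = (fderiv ℂ g z).restrictScalars ℝ :=
    (hg.hasFDerivAt.restrictScalars ℝ).fderiv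
  unfold wirtinger
  rw [h1]
  simp only [ContinuousLinearMap.coe_comp', Function.comp_apply, h3,
    ContinuousLinearMap.coe_restrictScalars', h2, ContinuousLinearEquiv.coe_coe,
    Complex.conjCLE_apply]
  rw [map_mul]
  simp [Complex.conj_I]
  ring_nf
  rw [Complex.I_sq]
  ring

lemma wirtinger_congr {g h : ℂ → ℂ} {z : ℂ} (hgh : g =ᶠ[nhds z] h) :
    wirtinger g z = wirtinger h z := by
  unfold wirtinger
  rw [hgh.fderiv_eq]

lemma wirtinger_add {g h : ℂ → ℂ} {z : ℂ} (hg : DifferentiableAt ℝ g z)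
    (hh : DifferentiableAt ℝ h z) :
    wirtinger (fun w => g w + h w) z = wirtinger g z + wirtinger h z := by
  unfold wirtinger
  rw [fderiv_fun_add hg hh]
  simp
  ring

/-- For `f` holomorphic with nonvanishing derivative on an open set `U`, the
Hernández–Martín Schwarzian derivative `ρ_zz − (1/2)(ρ_z)²` of `f`, with
`ρ = log |f'|²`, reduces to the classical Schwarzian derivative
`f'''/f' − (3/2)(f''/f')²`. -/
theorem schwarzian_reduces_to_classical (U : Set ℂ) (hU : IsOpen U) (f : ℂ → ℂ)
    (hf : DifferentiableOn ℂ f U) (hf' : ∀ z ∈ U, deriv f z ≠ 0)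
    (ρ : ℂ → ℂ) (hρ : ∀ z ∈ U, ρ z = (Real.log (‖deriv f z‖ ^ 2) : ℂ)) :
    ∀ z ∈ U, wirtinger (wirtinger ρ) z - (1 / 2) * (wirtinger ρ z) ^ 2 =
      deriv (deriv (deriv f)) z / deriv f z -
        (3 / 2) * (deriv (deriv f) z / deriv f z) ^ 2 := by
  intro z hz
  have hA : AnalyticOnNhd ℂ f U := hf.analyticOnNhd hU
  have hD1 : AnalyticOnNhd ℂ (deriv f) U := hA.deriv
  have hD2 : AnalyticOnNhd ℂ (deriv (deriv f)) U := hD1.deriv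
  set c := deriv f z with hc_def
  have hc : c ≠ 0 := hf' z hz
  -- open set V
  have hcont : ContinuousOn (fun w => deriv f w / c) U :=
    (hD1.continuousOn.div_const c)
  have hVopen : IsOpen (U ∩ (fun w => deriv f w / c) ⁻¹' Metric.ball (1:ℂ) 1) :=
    hcont.isOpen_inter_preimage hU Metric.isOpen_ball
  set V := U ∩ (fun w => deriv f w / c) ⁻¹' Metric.ball (1:ℂ) 1 with hV_def
  have hzV : z ∈ V := by
    constructor
    · exact hz
    · rw [Set.mem_preimage, ← hc_def, div_self hc]; simp
  -- slit plane membership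
  have hslit : ∀ w ∈ V, deriv f w / c ∈ Complex.slitPlane := by
    intro w hw
    have hb : dist (deriv f w / c) 1 < 1 := hw.2
    rw [Complex.mem_slitPlane_iff]
    left
    have h1 : ‖deriv f w / c - 1‖ < 1 := by
      rwa [Complex.dist_eq] at hb
    have h2 : |(deriv f w / c - 1).re| ≤ ‖deriv f w / c - 1‖ :=
      Complex.abs_re_le_norm _
    have : |(deriv f w / c).re - 1| < 1 := by
      simpa using lt_of_le_of_lt h2 h1
    have := abs_lt.mp this
    linarith [this.1]
  -- local holomorphic logarithm
  set h : ℂ → ℂ := fun w => Complex.log (deriv f w / c) + Complex.log c with hh_def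
  have hderiv_h : ∀ w ∈ V, HasDerivAt h (deriv (deriv f) w / deriv f w) w := by
    intro w hw
    have hg : HasDerivAt (fun w => deriv f w / c) (deriv (deriv f) w / c) w :=
      ((hD1 w hw.1).differentiableAt.hasDerivAt).div_const c
    have hlog : HasDerivAt Complex.log (deriv f w / c)⁻¹ (deriv f w / c) :=
      Complex.hasDerivAt_log (hslit w hw)
    have hcomp := (hlog.comp w hg).add_const (Complex.log c)
    have heq : (deriv f w / c)⁻¹ * (deriv (deriv f) w / c)
        = deriv (deriv f) w / deriv f w := by
      have hfw : deriv f w ≠ 0 := hf' w hw.1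
      field_simp
    rwa [heq] at hcomp
  -- ρ = h + conj h on V
  have hρV : ∀ w ∈ V, ρ w = h w + (starRingEnd ℂ) (h w) := by
    intro w hw
    have hfw : deriv f w ≠ 0 := hf' w hw.1
    rw [hρ w hw.1, Complex.add_conj]
    have hre : (h w).re = Real.log (‖deriv f w‖) := by
      simp only [hh_def, Complex.add_re, Complex.log_re, norm_div]
      rw [Real.log_div (norm_ne_zero_iff.mpr hfw) (norm_ne_zero_iff.mpr hc)]
      ring
    rw [hre]
    have : Real.log (‖deriv f w‖ ^ 2)
        = 2 * Real.log (‖deriv f w‖) := by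
      rw [Real.log_pow]; push_cast; ring
    rw [this]
  -- wirtinger ρ = f''/f' on V
  have hw1 : ∀ w ∈ V, wirtinger ρ w = deriv (deriv f) w / deriv f w := by
    intro w hw
    have hev : ρ =ᶠ[nhds w] fun x => h x + (starRingEnd ℂ) (h x) :=
      Filter.eventuallyEq_of_mem (hVopen.mem_nhds hw) hρV
    have hhd : DifferentiableAt ℂ h w := (hderiv_h w hw).differentiableAt
    have hconjd : DifferentiableAt ℝ (fun x => (starRingEnd ℂ) (h x)) w :=
      (Complex.conjCLE.differentiable.differentiableAt).comp w (hhd.restrictScalars ℝ)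
    rw [wirtinger_congr hev,
      wirtinger_add (hhd.restrictScalars ℝ) hconjd,
      wirtinger_of_differentiableAt hhd, wirtinger_conj hhd, (hderiv_h w hw).deriv]
    ring
  -- second wirtinger derivative
  have hev2 : wirtinger ρ =ᶠ[nhds z] fun w => deriv (deriv f) w / deriv f w :=
    Filter.eventuallyEq_of_mem (hVopen.mem_nhds hzV) hw1
  have hqd : DifferentiableAt ℂ (fun w => deriv (deriv f) w / deriv f w) z :=
    ((hD2 z hz).differentiableAt).div ((hD1 z hz).differentiableAt) hc
  have hstep : wirtinger (wirtinger ρ) z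
      = deriv (fun w => deriv (deriv f) w / deriv f w) z := by
    rw [wirtinger_congr hev2, wirtinger_of_differentiableAt hqd]
  have hdq : deriv (fun w => deriv (deriv f) w / deriv f w) z
      = (deriv (deriv (deriv f)) z * c - deriv (deriv f) z * deriv (deriv f) z) / c ^ 2 := by
    rw [deriv_fun_div ((hD2 z hz).differentiableAt) ((hD1 z hz).differentiableAt) hc]
  have hρz : wirtinger ρ z = deriv (deriv f) z / c := hw1 z hzV
  rw [hstep, hdq, hρz]
  field_simp
  ring
end
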